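/- For 0 < q < p ≤ 1, real α, β with 0 ≤ α ≤ β, n ≥ 1, and x ∈ [0,1], the second moment of the (p,q)-Bernstein-Stancu operator satisfies S_{n,p,q}(t²; x) = (q[n]_{p,q}[n−1]_{p,q}/([n]_{p,q}+β)²) x² + ([n]_{p,q}(2α + p^{n−1})/([n]_{p,q}+β)²) x + α²/([n]_{p,q}+β)². -/

import Mathlib

open Finset

noncomputable def pqInt (p q : ℝ) (m : ℕ) : ℝ :=
  ∑ i ∈ Finset.range m, p ^ (m - 1 - i) * q ^ i

noncomputable def pqFact (p q : ℝ) (n : ℕ) : ℝ :=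
  ∏ j ∈ Finset.range n, pqInt p q (j + 1)

noncomputable def pqChoose (p q : ℝ) (n k : ℕ) : ℝ :=
  pqFact p q n / (pqFact p q k * pqFact p q (n - k))

noncomputable def pqBasis (p q : ℝ) (n k : ℕ) (x : ℝ) : ℝ :=
  pqChoose p q n k * (p ^ (k * (k - 1) / 2) / p ^ (n * (n - 1) / 2)) * x ^ k *
    ∏ s ∈ Finset.range (n - k), (p ^ s - q ^ s * x)

noncomputable def pqNode (p q α β : ℝ) (n k : ℕ) : ℝ :=
  (p ^ (n - k) * pqInt p q k + α) / (pqInt p q n + β)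

noncomputable def pqStancu (p q α β : ℝ) (n : ℕ) (f : ℝ → ℝ) (x : ℝ) : ℝ :=
  ∑ k ∈ Finset.range (n + 1), pqBasis p q n k x * f (pqNode p q α β n k)

lemma tri (n : ℕ) : (n+1) * ((n+1) - 1) / 2 = n * (n-1) / 2 + n := by
  have he : Even (n * (n-1)) := by
    cases n with
    | zero => simp
    | succ m => simpa [Nat.mul_comm] using Nat.even_mul_succ_self m
  obtain ⟨c, hc⟩ := he
  have h2 : (n+1) * ((n+1) - 1) = n * (n-1) + 2 * n := by
    cases n with
    | zero => simp
    | succ m =>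
        simp only [Nat.add_sub_cancel]
        ring
  omega

lemma pqInt_zero (p q : ℝ) : pqInt p q 0 = 0 := by simp [pqInt]

lemma pqInt_one (p q : ℝ) : pqInt p q 1 = 1 := by simp [pqInt]

lemma pqInt_succ (p q : ℝ) (m : ℕ) : pqInt p q (m+1) = p ^ m + q * pqInt p q m := by
  unfold pqInt
  rw [Finset.sum_range_succ']
  simp only [Nat.add_sub_cancel, Nat.sub_zero, pow_zero, mul_one, Finset.mul_sum]
  rw [add_comm]
  congr 1
  refine Finset.sum_congr rfl fun i _ => ?_
  have : m - (i + 1) = m - 1 - i := by omega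
  rw [this, pow_succ]
  ring

lemma pqInt_succ' (p q : ℝ) (m : ℕ) : pqInt p q (m+1) = p * pqInt p q m + q ^ m := by
  unfold pqInt
  rw [Finset.sum_range_succ]
  simp only [Nat.add_sub_cancel, Nat.sub_self, pow_zero, one_mul, Finset.mul_sum]
  congr 1
  refine Finset.sum_congr rfl fun i hi => ?_
  rw [Finset.mem_range] at hi
  have : m - i = (m - 1 - i) + 1 := by omega
  rw [this, pow_succ]
  ring

lemma pqInt_add (p q : ℝ) (a b : ℕ) :
    pqInt p q (a + b) = p ^ b * pqInt p q a + q ^ a * pqInt p q b := by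
  induction b with
  | zero => simp [pqInt_zero]
  | succ b ih =>
      rw [show a + (b+1) = (a+b) + 1 from rfl, pqInt_succ', ih, pqInt_succ']
      ring

lemma pqInt_pos {p q : ℝ} (hp : 0 < p) (hq : 0 < q) {m : ℕ} (hm : 1 ≤ m) :
    0 < pqInt p q m := by
  unfold pqInt
  apply Finset.sum_pos
  · exact fun i _ => mul_pos (pow_pos hp _) (pow_pos hq _)
  · exact Finset.nonempty_range_iff.mpr (by omega)

lemma pqFact_pos {p q : ℝ} (hp : 0 < p) (hq : 0 < q) (n : ℕ) : 0 < pqFact p q n :=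
  Finset.prod_pos fun j _ => pqInt_pos hp hq (by omega)

lemma pqFact_succ (p q : ℝ) (n : ℕ) :
    pqFact p q (n+1) = pqFact p q n * pqInt p q (n+1) := Finset.prod_range_succ _ _

lemma pqChoose_zero {p q : ℝ} (hp : 0 < p) (hq : 0 < q) (n : ℕ) : pqChoose p q n 0 = 1 := by
  unfold pqChoose
  rw [show pqFact p q 0 = 1 from by simp [pqFact], Nat.sub_zero, one_mul,
    div_self (pqFact_pos hp hq n).ne']

lemma pqChoose_self {p q : ℝ} (hp : 0 < p) (hq : 0 < q) (n : ℕ) : pqChoose p q n n = 1 := by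
  unfold pqChoose
  rw [Nat.sub_self, show pqFact p q 0 = 1 from by simp [pqFact], mul_one,
    div_self (pqFact_pos hp hq n).ne']

lemma pqChoose_mul {p q : ℝ} (hp : 0 < p) (hq : 0 < q) (n j : ℕ) :
    pqChoose p q (n+1) (j+1) * pqInt p q (j+1) = pqInt p q (n+1) * pqChoose p q n j := by
  unfold pqChoose
  rw [show (n+1) - (j+1) = n - j from by omega, pqFact_succ p q n, pqFact_succ p q j]
  have h1 := (pqFact_pos hp hq n).ne'
  have h2 := (pqFact_pos hp hq j).ne'
  have h3 := (pqFact_pos hp hq (n-j)).ne'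
  have h4 := (pqInt_pos hp hq (show 1 ≤ j+1 by omega)).ne'
  field_simp

lemma pqPascal {p q : ℝ} (hp : 0 < p) (hq : 0 < q) {n k : ℕ} (hk : k < n) :
    pqChoose p q (n+1) (k+1) =
      p ^ (k+1) * pqChoose p q n (k+1) + q ^ (n-k) * pqChoose p q n k := by
  have hsplit : pqInt p q (n+1) = p ^ (k+1) * pqInt p q (n-k) + q ^ (n-k) * pqInt p q (k+1) := by
    rw [show n + 1 = (n-k) + (k+1) from by omega, pqInt_add]
  obtain ⟨d, hd⟩ : ∃ d, n - k = d + 1 := ⟨n - k - 1, by omega⟩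
  unfold pqChoose
  rw [show (n+1) - (k+1) = n - k from by omega, show n - (k+1) = d from by omega, hd,
    pqFact_succ p q n, pqFact_succ p q k, pqFact_succ p q d]
  rw [hd] at hsplit
  have h1 := (pqFact_pos hp hq n).ne'
  have h2 := (pqFact_pos hp hq k).ne'
  have h3 := (pqFact_pos hp hq d).ne'
  have h4 := (pqInt_pos hp hq (show 1 ≤ k+1 by omega)).ne'
  have h5 := (pqInt_pos hp hq (show 1 ≤ d+1 by omega)).ne'
  rw [hsplit]
  field_simp

lemma basis_zero {p q : ℝ} (hp : 0 < p) (hq : 0 < q) (n : ℕ) (x : ℝ) :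
    pqBasis p q (n+1) 0 x = pqBasis p q n 0 x * (1 - (q/p) ^ n * x) := by
  unfold pqBasis
  rw [pqChoose_zero hp hq, pqChoose_zero hp hq, tri, Nat.sub_zero, Nat.sub_zero,
    Finset.prod_range_succ, pow_add]
  have hpn := pow_ne_zero (n*(n-1)/2) hp.ne'
  have hpn2 := pow_ne_zero n hp.ne'
  have hqp : (q/p)^n * p^n = q^n := by
    rw [div_pow]; field_simp
  rw [div_pow]
  field_simp
  ring

lemma basis_top {p q : ℝ} (hp : 0 < p) (hq : 0 < q) (n : ℕ) (x : ℝ) :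
    pqBasis p q (n+1) (n+1) x = pqBasis p q n n x * x := by
  unfold pqBasis
  rw [pqChoose_self hp hq, pqChoose_self hp hq, Nat.sub_self, Nat.sub_self]
  simp [div_self (pow_ne_zero _ hp.ne'), pow_succ]

lemma basis_rec {p q : ℝ} (hp : 0 < p) (hq : 0 < q) {n k : ℕ} (hk : k < n) (x : ℝ) :
    pqBasis p q (n+1) (k+1) x =
      pqBasis p q n (k+1) x * (1 - (q/p) ^ (n-(k+1)) * x)
      + pqBasis p q n k x * ((q/p) ^ (n-k) * x) := by
  obtain ⟨m, rfl⟩ : ∃ m, n = k+1+m := ⟨n-k-1, by omega⟩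
  unfold pqBasis
  rw [pqPascal hp hq hk]
  rw [show (k+1+m) - (k+1) = m from by omega,
      show (k+1+m) - k = m+1 from by omega, show (k+1+m+1) - (k+1) = m+1 from by omega,
      tri (k+1+m), tri k]
  rw [Finset.prod_range_succ]
  have hpm := pow_ne_zero ((k+1+m)*((k+1+m)-1)/2) hp.ne'
  have hpk := pow_ne_zero (k*(k-1)/2) hp.ne'
  simp only [div_pow]
  field_simp
  ring

lemma basis_shift {p q : ℝ} (hp : 0 < p) (hq : 0 < q) {n j : ℕ} (hj : j ≤ n) (x : ℝ) :
    pqBasis p q (n+1) (j+1) x * (p ^ (n-j) * pqInt p q (j+1)) =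
      pqInt p q (n+1) * x * pqBasis p q n j x := by
  obtain ⟨m, rfl⟩ : ∃ m, n = j + m := ⟨n-j, by omega⟩
  have h4 := (pqInt_pos hp hq (show 1 ≤ j+1 by omega)).ne'
  have hc : pqChoose p q (j+m+1) (j+1)
      = pqInt p q (j+m+1) * pqChoose p q (j+m) j / pqInt p q (j+1) := by
    rw [eq_div_iff h4]
    exact pqChoose_mul hp hq (j+m) j
  unfold pqBasis
  rw [show (j+m+1) - (j+1) = m from by omega, show (j+m) - j = m from by omega,
      tri (j+m), tri j, hc]
  have hpm := pow_ne_zero ((j+m)*((j+m)-1)/2) hp.ne'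
  have hpj := pow_ne_zero (j*(j-1)/2) hp.ne'
  field_simp
  ring

lemma sumBasis {p q : ℝ} (hp : 0 < p) (hq : 0 < q) (x : ℝ) (n : ℕ) :
    ∑ k ∈ Finset.range (n+1), pqBasis p q n k x = 1 := by
  induction n with
  | zero =>
      simp [pqBasis, pqChoose_self hp hq]
  | succ n ih =>
      have step : ∑ k ∈ Finset.range (n+1+1), pqBasis p q (n+1) k x
          = (∑ k ∈ Finset.range (n+1), pqBasis p q n k x * (1 - (q/p) ^ (n-k) * x))
            + (∑ k ∈ Finset.range (n+1), pqBasis p q n k x * ((q/p) ^ (n-k) * x)) := by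
        rw [Finset.sum_range_succ' (fun k => pqBasis p q (n+1) k x) (n+1),
            Finset.sum_range_succ (fun k => pqBasis p q (n+1) (k+1) x) n,
            Finset.sum_range_succ' (fun k => pqBasis p q n k x * (1 - (q/p) ^ (n-k) * x)) n,
            Finset.sum_range_succ (fun k => pqBasis p q n k x * ((q/p) ^ (n-k) * x)) n,
            Finset.sum_congr rfl (fun k hk => basis_rec hp hq (Finset.mem_range.mp hk) x),
            Finset.sum_add_distrib, basis_top hp hq, basis_zero hp hq]
        simp only [Nat.sub_zero, Nat.sub_self, pow_zero, one_mul]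
        ring
      rw [step, ← Finset.sum_add_distrib]
      exact (Finset.sum_congr rfl fun k _ => by ring).trans ih

lemma sumBasisMom1 {p q : ℝ} (hp : 0 < p) (hq : 0 < q) (x : ℝ) (n : ℕ) :
    ∑ k ∈ Finset.range (n+1), pqBasis p q n k x * (p ^ (n-k) * pqInt p q k)
      = pqInt p q n * x := by
  cases n with
  | zero => simp [pqInt_zero]
  | succ n =>
      rw [Finset.sum_range_succ' (fun k => pqBasis p q (n+1) k x * (p ^ (n+1-k) * pqInt p q k)) (n+1)]
      simp only [pqInt_zero, mul_zero, add_zero]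
      have h : ∀ k ∈ Finset.range (n+1),
          pqBasis p q (n+1) (k+1) x * (p ^ (n+1-(k+1)) * pqInt p q (k+1))
            = pqInt p q (n+1) * x * pqBasis p q n k x := by
        intro k hk
        rw [show n+1-(k+1) = n-k from by omega]
        exact basis_shift hp hq (by have := Finset.mem_range.mp hk; omega) x
      rw [Finset.sum_congr rfl h, ← Finset.mul_sum, sumBasis hp hq x n, mul_one]

lemma sumBasisMom2 {p q : ℝ} (hp : 0 < p) (hq : 0 < q) (x : ℝ) (n : ℕ) :
    ∑ k ∈ Finset.range (n+2), pqBasis p q (n+1) k x * (p ^ (n+1-k) * pqInt p q k) ^ 2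
      = pqInt p q (n+1) * x * (p ^ n + q * pqInt p q n * x) := by
  rw [Finset.sum_range_succ' (fun k => pqBasis p q (n+1) k x * (p ^ (n+1-k) * pqInt p q k) ^ 2) (n+1)]
  simp only [pqInt_zero, mul_zero, add_zero, ne_eq, OfNat.ofNat_ne_zero,
    not_false_eq_true, zero_pow]
  have h : ∀ k ∈ Finset.range (n+1),
      pqBasis p q (n+1) (k+1) x * (p ^ (n+1-(k+1)) * pqInt p q (k+1)) ^ 2
        = pqInt p q (n+1) * x *
            (p ^ n * pqBasis p q n k x
              + q * (pqBasis p q n k x * (p ^ (n-k) * pqInt p q k))) := by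
    intro k hk
    have hk' : k ≤ n := by have := Finset.mem_range.mp hk; omega
    have hsh := basis_shift hp hq hk' x
    have hpk : p ^ (n-k) * p ^ k = p ^ n := by
      rw [← pow_add]; congr 1; omega
    rw [show n+1-(k+1) = n-k from by omega]
    calc pqBasis p q (n+1) (k+1) x * (p ^ (n-k) * pqInt p q (k+1)) ^ 2
        = (pqBasis p q (n+1) (k+1) x * (p ^ (n-k) * pqInt p q (k+1)))
            * (p ^ (n-k) * pqInt p q (k+1)) := by ring
      _ = pqInt p q (n+1) * x * pqBasis p q n k x
            * (p ^ (n-k) * (p ^ k + q * pqInt p q k)) := by rw [hsh, pqInt_succ p q k]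
      _ = pqInt p q (n+1) * x *
            (p ^ n * pqBasis p q n k x
              + q * (pqBasis p q n k x * (p ^ (n-k) * pqInt p q k))) := by
          rw [← hpk]; ring
  rw [Finset.sum_congr rfl h, ← Finset.mul_sum, Finset.sum_add_distrib,
    ← Finset.mul_sum, ← Finset.mul_sum, sumBasis hp hq x n]
  have := sumBasisMom1 hp hq x n
  rw [this, mul_one]
  ring

theorem pqStancu_sq (p q α β x : ℝ) (hq : 0 < q) (hqp : q < p) (hp : p ≤ 1)
    (hα : 0 ≤ α) (hαβ : α ≤ β) (n : ℕ) (hn : 1 ≤ n) (hx : x ∈ Set.Icc (0 : ℝ) 1) :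
    pqStancu p q α β n (fun t => t ^ 2) x =
      (q * pqInt p q n * pqInt p q (n - 1) / (pqInt p q n + β) ^ 2) * x ^ 2 +
        (pqInt p q n * (2 * α + p ^ (n - 1)) / (pqInt p q n + β) ^ 2) * x +
        α ^ 2 / (pqInt p q n + β) ^ 2 := by
  have hp0 : 0 < p := hq.trans hqp
  obtain ⟨m, rfl⟩ : ∃ m, n = m + 1 := ⟨n - 1, by omega⟩
  have hD : (0:ℝ) < pqInt p q (m+1) + β :=
    add_pos_of_pos_of_nonneg (pqInt_pos hp0 hq (by omega)) (le_trans hα hαβ)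
  simp only [pqStancu, pqNode]
  have key : ∀ k ∈ Finset.range (m+2),
      pqBasis p q (m+1) k x *
          ((p ^ (m+1-k) * pqInt p q k + α) / (pqInt p q (m+1) + β)) ^ 2
        = (pqBasis p q (m+1) k x * (p ^ (m+1-k) * pqInt p q k) ^ 2
            + 2 * α * (pqBasis p q (m+1) k x * (p ^ (m+1-k) * pqInt p q k))
            + α ^ 2 * pqBasis p q (m+1) k x) / (pqInt p q (m+1) + β) ^ 2 := by
    intro k _
    rw [div_pow]
    field_simp
    ring
  rw [Finset.sum_congr rfl key, ← Finset.sum_div, Finset.sum_add_distrib,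
    Finset.sum_add_distrib, ← Finset.mul_sum, ← Finset.mul_sum,
    sumBasisMom2 hp0 hq x m, sumBasisMom1 hp0 hq x (m+1), sumBasis hp0 hq x (m+1)]
  rw [show m + 1 - 1 = m from rfl]
  field_simp
  ring
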